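/- arXiv:2006.11899 — 7 statements merged into one kernel-verified Lean document; each statement's English description precedes it below -/
import Mathlib

section
/- Let μ be a probability measure on ℝ and let w ∈ ℂ with Im w > 0. Then the reciprocal Cauchy transform F_μ(w) = 1/G_μ(w) satisfies Im F_μ(w) ≥ Im(w). -/
open MeasureTheory

/-- The Cauchy transform of a measure `μ` on `ℝ`: `G_μ(z) = ∫ (z - x)⁻¹ dμ(x)`. -/
noncomputable def cauchyTransform (μ : Measure ℝ) (z : ℂ) : ℂ :=
  ∫ x, (z - (x : ℂ))⁻¹ ∂μ

/-- For a probability measure `μ` and `Im w > 0`, the reciprocal Cauchy transform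
`F_μ(w) = 1/G_μ(w)` satisfies `Im F_μ(w) ≥ Im w`. -/
theorem im_inv_cauchyTransform_ge (μ : Measure ℝ) [IsProbabilityMeasure μ]
    (w : ℂ) (hw : 0 < w.im) :
    w.im ≤ ((cauchyTransform μ w)⁻¹).im := by
  set f : ℝ → ℂ := fun x => (w - (x : ℂ))⁻¹ with hfdef
  set h : ℝ → ℝ := fun x => ‖w - (x : ℂ)‖⁻¹ with hhdef
  have him : ∀ x : ℝ, (w - (x : ℂ)).im = w.im := by intro x; simp
  have hne : ∀ x : ℝ, (w - (x : ℂ)) ≠ 0 := by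
    intro x h0
    have : (w - (x : ℂ)).im = 0 := by rw [h0]; simp
    rw [him x] at this; linarith
  have hnormpos : ∀ x : ℝ, 0 < ‖w - (x : ℂ)‖ := fun x => norm_pos_iff.2 (hne x)
  have hnormge : ∀ x : ℝ, w.im ≤ ‖w - (x : ℂ)‖ := by
    intro x
    calc w.im = |(w - (x : ℂ)).im| := by rw [him x, abs_of_pos hw]
    _ ≤ ‖w - (x : ℂ)‖ := Complex.abs_im_le_norm _
  have hhble : ∀ x : ℝ, h x ≤ w.im⁻¹ := fun x =>
    inv_anti₀ hw (hnormge x)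
  have hhnonneg : ∀ x : ℝ, 0 ≤ h x := fun x => inv_nonneg.2 (norm_nonneg _)
  have hcont : Continuous f := by
    apply Continuous.inv₀ (by continuity) hne
  have hcontth : Continuous h := by
    apply Continuous.inv₀ ((by continuity : Continuous fun x : ℝ => w - (x:ℂ)).norm)
    intro x; exact (hnormpos x).ne'
  have hif : Integrable f μ := by
    refine (integrable_const (w.im⁻¹)).mono' hcont.aestronglyMeasurable ?_
    filter_upwards with x
    rw [hfdef]
    simpa [norm_inv] using hhble x
  have hih : Integrable h μ := by
    refine (integrable_const (w.im⁻¹)).mono' hcontth.aestronglyMeasurable ?_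
    filter_upwards with x
    rw [Real.norm_eq_abs, abs_of_nonneg (hhnonneg x)]
    exact hhble x
  have hih2 : Integrable (fun x => (h x) ^ 2) μ := by
    refine (integrable_const ((w.im⁻¹) ^ 2)).mono' (hcontth.pow 2).aestronglyMeasurable ?_
    filter_upwards with x
    rw [Real.norm_eq_abs, abs_of_nonneg (pow_nonneg (hhnonneg x) 2)]
    exact pow_le_pow_left₀ (hhnonneg x) (hhble x) 2
  set G : ℂ := cauchyTransform μ w with hG
  set I₂ : ℝ := ∫ x, (h x) ^ 2 ∂μ with hI₂
  -- Im G = - w.im * I₂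
  have himf : ∀ x : ℝ, (f x).im = -w.im * (h x) ^ 2 := by
    intro x
    rw [hfdef]
    simp only [Complex.inv_im, him x, Complex.normSq_eq_norm_sq]
    rw [hhdef]
    field_simp
  have himG : G.im = -w.im * I₂ := by
    have h1 : (∫ x, f x ∂μ).im = ∫ x, (f x).im ∂μ := (integral_im hif).symm
    rw [hG]
    unfold cauchyTransform
    rw [show (∫ x, (w - (x:ℂ))⁻¹ ∂μ) = ∫ x, f x ∂μ from rfl, h1]
    simp only [himf]
    rw [integral_const_mul (μ := μ) (-w.im) (fun x => (h x)^2)]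
  -- I₂ > 0
  have hI₂pos : 0 < I₂ := by
    rw [hI₂, integral_pos_iff_support_of_nonneg (fun x => pow_nonneg (hhnonneg x) 2) hih2]
    have : (Function.support fun x => (h x) ^ 2) = Set.univ := by
      ext x
      simp only [Function.mem_support, Set.mem_univ, iff_true]
      exact (pow_pos (inv_pos.2 (hnormpos x)) 2).ne'
    rw [this]
    simp
  -- ‖G‖ ≤ ∫ h
  have hnormG : ‖G‖ ≤ ∫ x, h x ∂μ := by
    calc ‖G‖ ≤ ∫ x, ‖f x‖ ∂μ := norm_integral_le_integral_norm f
    _ = ∫ x, h x ∂μ := by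
        congr 1; ext x; rw [hfdef, hhdef]; simp [norm_inv]
  -- Cauchy-Schwarz: (∫ h)^2 ≤ I₂
  have hCS : (∫ x, h x ∂μ) ^ 2 ≤ I₂ := by
    set m : ℝ := ∫ x, h x ∂μ with hm
    have hvar : 0 ≤ ∫ x, (h x - m) ^ 2 ∂μ :=
      integral_nonneg fun x => sq_nonneg _
    have hexp : ∫ x, (h x - m) ^ 2 ∂μ = I₂ - m ^ 2 := by
      have : ∀ x : ℝ, (h x - m) ^ 2 = (h x) ^ 2 - (2 * m) * h x + m ^ 2 := by
        intro x; ring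
      simp only [this]
      have e1 : Integrable (fun x => (h x) ^ 2 - (2 * m) * h x) μ :=
        hih2.sub (hih.const_mul (2*m))
      rw [integral_add e1 (integrable_const _),
        integral_sub hih2 (hih.const_mul (2*m)), integral_const_mul, integral_const]
      simp [measure_univ, ← hm]
      ring
    linarith [hexp ▸ hvar]
  have hnsq : Complex.normSq G ≤ I₂ := by
    rw [Complex.normSq_eq_norm_sq]
    calc ‖G‖ ^ 2 ≤ (∫ x, h x ∂μ) ^ 2 := by
          apply pow_le_pow_left₀ (norm_nonneg _) hnormG
    _ ≤ I₂ := hCS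
  have hGne : G ≠ 0 := by
    intro h0
    rw [h0] at himG
    simp at himG
    rcases himG with h1 | h1
    · linarith
    · linarith
  have hnsqpos : 0 < Complex.normSq G := Complex.normSq_pos.2 hGne
  rw [Complex.inv_im, himG]
  rw [le_div_iff₀ hnsqpos]
  have : -(-w.im * I₂) = w.im * I₂ := by ring
  rw [this]
  exact mul_le_mul_of_nonneg_left hnsq hw.le
end

section
/- Let t > 0. For every v ∈ ℂ with Im v > 0, one has Im(√(v² − 4t)) ≤ √(Im(v)² + 4t), where the left-hand side uses the principal branch of the complex square root and the right-hand side is the real square root. -/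
/-- For `t > 0` and `Im v > 0`, `Im √(v² − 4t) ≤ √(Im(v)² + 4t)`, where the left-hand side
uses the principal branch of the complex square root. -/
theorem im_csqrt_le (t : ℝ) (ht : 0 < t) (v : ℂ) (hv : 0 < v.im) :
    ((v ^ 2 - 4 * (t : ℂ)) ^ (1 / 2 : ℂ)).im ≤ Real.sqrt (v.im ^ 2 + 4 * t) := by
  set a := v.re with ha
  set b := v.im with hb
  set w : ℂ := v ^ 2 - 4 * (t : ℂ) with hwdef
  have hwre : w.re = a ^ 2 - b ^ 2 - 4 * t := by
    simp [hwdef, Complex.sub_re, Complex.mul_re, sq, Complex.ofReal_re, Complex.ofReal_im]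
    rfl
  have hwim : w.im = 2 * a * b := by
    simp [hwdef, Complex.sub_im, Complex.mul_im, sq, Complex.ofReal_re, Complex.ofReal_im]
    ring
  have hw0 : w ≠ 0 := by
    intro h
    have h1 : w.re = 0 := by rw [h]; simp
    have h2 : w.im = 0 := by rw [h]; simp
    rw [hwim] at h2
    rw [hwre] at h1
    have ha0 : a = 0 := by
      rcases mul_eq_zero.mp h2 with h | h
      · rcases mul_eq_zero.mp h with h | h
        · norm_num at h
        · exact h
      · exact absurd h (ne_of_gt hv)
    rw [ha0] at h1
    nlinarith
  set s : ℂ := w ^ (1 / 2 : ℂ) with hsdef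
  -- s^2 = w
  have hs2 : s * s = w := by
    rw [hsdef, ← Complex.cpow_add _ _ hw0]
    norm_num
  -- Re s ≥ 0
  have hre : 0 ≤ s.re := by
    rw [hsdef, Complex.cpow_def_of_ne_zero hw0, Complex.exp_re]
    apply mul_nonneg (Real.exp_pos _).le
    apply Real.cos_nonneg_of_mem_Icc
    constructor
    · simp [Complex.mul_im, Complex.log_im, Complex.log_re]
      nlinarith [Complex.neg_pi_lt_arg w, Real.pi_pos]
    · simp [Complex.mul_im, Complex.log_im, Complex.log_re]
      nlinarith [Complex.arg_le_pi w, Real.pi_pos]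
  -- abs relations
  have habs : ‖s‖ ^ 2 = ‖w‖ := by
    rw [sq, ← norm_mul, hs2]
  have hsq : s.re ^ 2 + s.im ^ 2 = ‖w‖ := by
    rw [← habs, Complex.sq_norm, Complex.normSq_apply]; ring
  have hrew : s.re ^ 2 - s.im ^ 2 = w.re := by
    have := congrArg Complex.re hs2
    simp [Complex.mul_re] at this
    nlinarith [this]
  have him2 : s.im ^ 2 = (‖w‖ - w.re) / 2 := by linarith
  -- abs w ≤ a^2 + b^2 + 4t
  have habsle : ‖w‖ ≤ a ^ 2 + b ^ 2 + 4 * t := by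
    have h1 : ‖w‖ ^ 2 = w.re ^ 2 + w.im ^ 2 := by
      rw [Complex.sq_norm, Complex.normSq_apply]; ring
    have h2 : 0 ≤ ‖w‖ := norm_nonneg w
    rw [hwre, hwim] at h1
    nlinarith [sq_nonneg a, sq_nonneg b, sq_nonneg (‖w‖ + (a ^ 2 + b ^ 2 + 4 * t))]
  have hkey : s.im ^ 2 ≤ b ^ 2 + 4 * t := by
    rw [him2, hwre]
    linarith
  rcases le_or_gt s.im 0 with h | h
  · exact le_trans h (Real.sqrt_nonneg _)
  · rw [Real.le_sqrt h.le]
    exact hkey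
    nlinarith
end

section
/- Let t > 0, let μ be a probability measure on ℝ, and let z ∈ ℂ with Im z > 2√t. Then there exists a unique w ∈ ℂ with Im w > Im(z)/2 satisfying the functional equation (w − z)/t = G_μ(w); moreover this w satisfies |w − z| ≤ √t. -/
open MeasureTheory

lemma im_le_abs_sub (w : ℂ) (x : ℝ) : w.im ≤ ‖w - (x:ℂ)‖ := by
  have h : (w - (x:ℂ)).im = w.im := by simp
  calc w.im ≤ |(w - (x:ℂ)).im| := by rw [h]; exact le_abs_self _
    _ ≤ ‖w - (x:ℂ)‖ := Complex.abs_im_le_norm _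

lemma sub_ne_zero_of_im (w : ℂ) (hw : 0 < w.im) (x : ℝ) : w - (x:ℂ) ≠ 0 := by
  intro h
  have h2 : (w - (x:ℂ)).im = 0 := by rw [h]; simp
  simp only [Complex.sub_im, Complex.ofReal_im, sub_zero] at h2
  linarith

lemma norm_inv_sub_le (w : ℂ) (hw : 0 < w.im) (x : ℝ) :
    ‖(w - (x:ℂ))⁻¹‖ ≤ (w.im)⁻¹ := by
  rw [norm_inv]
  have h := im_le_abs_sub w x
  exact inv_anti₀ hw h

lemma continuous_inv_sub (w : ℂ) (hw : 0 < w.im) :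
    Continuous fun x : ℝ => (w - (x:ℂ))⁻¹ :=
  (continuous_const.sub Complex.continuous_ofReal).inv₀ (fun x => sub_ne_zero_of_im w hw x)

lemma integrable_inv_sub (μ : Measure ℝ) [IsFiniteMeasure μ] (w : ℂ) (hw : 0 < w.im) :
    Integrable (fun x : ℝ => (w - (x:ℂ))⁻¹) μ := by
  refine Integrable.mono' (integrable_const ((w.im)⁻¹)) ((continuous_inv_sub w hw).aestronglyMeasurable) ?_
  exact Filter.Eventually.of_forall fun x => norm_inv_sub_le w hw x

lemma norm_cauchyTransform_le (μ : Measure ℝ) [IsProbabilityMeasure μ] (w : ℂ) (hw : 0 < w.im) :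
    ‖cauchyTransform μ w‖ ≤ (w.im)⁻¹ := by
  have h := norm_integral_le_of_norm_le_const (μ := μ) (f := fun x : ℝ => (w - (x:ℂ))⁻¹)
    (C := (w.im)⁻¹) (Filter.Eventually.of_forall (norm_inv_sub_le w hw))
  simpa [cauchyTransform, measure_univ] using h

lemma norm_cauchyTransform_sub_le (μ : Measure ℝ) [IsProbabilityMeasure μ] (w₁ w₂ : ℂ)
    (h1 : 0 < w₁.im) (h2 : 0 < w₂.im) :
    ‖cauchyTransform μ w₁ - cauchyTransform μ w₂‖ ≤ (w₁.im)⁻¹ * (w₂.im)⁻¹ * ‖w₁ - w₂‖ := by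
  rw [cauchyTransform, cauchyTransform,
    ← integral_sub (integrable_inv_sub μ w₁ h1) (integrable_inv_sub μ w₂ h2)]
  have hb : ∀ x : ℝ, ‖(w₁ - (x:ℂ))⁻¹ - (w₂ - (x:ℂ))⁻¹‖ ≤ (w₁.im)⁻¹ * (w₂.im)⁻¹ * ‖w₁ - w₂‖ := by
    intro x
    have ha := sub_ne_zero_of_im w₁ h1 x
    have hbne := sub_ne_zero_of_im w₂ h2 x
    rw [inv_sub_inv ha hbne]
    have he : (w₂ - (x:ℂ)) - (w₁ - (x:ℂ)) = w₂ - w₁ := by ring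
    have k1 : w₁.im ≤ ‖w₁ - (x:ℂ)‖ := by exact im_le_abs_sub w₁ x
    have k2 : w₂.im ≤ ‖w₂ - (x:ℂ)‖ := by exact im_le_abs_sub w₂ x
    have hpos : (0:ℝ) < ‖w₁ - (x:ℂ)‖ * ‖w₂ - (x:ℂ)‖ :=
      mul_pos (lt_of_lt_of_le h1 k1) (lt_of_lt_of_le h2 k2)
    rw [he, norm_div, norm_mul, div_le_iff₀ hpos]
    have hn : ‖w₂ - w₁‖ = ‖w₁ - w₂‖ := by rw [norm_sub_rev]
    rw [hn]
    have him : w₁.im * w₂.im ≤ ‖w₁ - (x:ℂ)‖ * ‖w₂ - (x:ℂ)‖ :=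
      mul_le_mul k1 k2 h2.le (le_trans h1.le k1)
    calc ‖w₁ - w₂‖ = (w₁.im)⁻¹ * (w₂.im)⁻¹ * ‖w₁ - w₂‖ * (w₁.im * w₂.im) := by
          field_simp
      _ ≤ _ := mul_le_mul_of_nonneg_left him (by positivity)
  have h := norm_integral_le_of_norm_le_const (μ := μ)
    (f := fun x : ℝ => (w₁ - (x:ℂ))⁻¹ - (w₂ - (x:ℂ))⁻¹)
    (C := (w₁.im)⁻¹ * (w₂.im)⁻¹ * ‖w₁ - w₂‖) (Filter.Eventually.of_forall hb)
  simpa [measure_univ] using h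

/-- For `t > 0`, a probability measure `μ` and `Im z > 2√t`, there is a unique `w` with
`Im w > Im z / 2` satisfying `(w − z)/t = G_μ(w)`; moreover this `w` satisfies `|w − z| ≤ √t`. -/
theorem existsUnique_subordination_fixedPoint (t : ℝ) (ht : 0 < t)
    (μ : Measure ℝ) [IsProbabilityMeasure μ] (z : ℂ) (hz : 2 * Real.sqrt t < z.im) :
    (∃! w : ℂ, z.im / 2 < w.im ∧ (w - z) / t = cauchyTransform μ w) ∧
    (∀ w : ℂ, z.im / 2 < w.im → (w - z) / t = cauchyTransform μ w →
      ‖w - z‖ ≤ Real.sqrt t) := by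
  have ht0 : (0:ℝ) ≤ t := ht.le
  have hs0 : 0 < Real.sqrt t := Real.sqrt_pos.mpr ht
  have hss : Real.sqrt t * Real.sqrt t = t := Real.mul_self_sqrt ht0
  set b : ℝ := z.im / 2 with hbdef
  have hst : Real.sqrt t < b := by
    simp only [hbdef]; linarith
  have hb0 : 0 < b := lt_trans hs0 hst
  have htc : (t : ℂ) ≠ 0 := by exact_mod_cast ht.ne'
  -- the fixed point map
  set F : ℂ → ℂ := fun w => z + (t : ℂ) * cauchyTransform μ w with hF
  have hfix : ∀ w : ℂ, ((w - z) / (t:ℂ) = cauchyTransform μ w ↔ F w = w) := by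
    intro w
    rw [div_eq_iff htc, hF]
    constructor
    · intro h; simp only; rw [mul_comm, ← h]; ring
    · intro h; simp only at h
      have : (t:ℂ) * cauchyTransform μ w = w - z := by linear_combination h
      rw [← this]; ring
  -- bound: any w with b < im w satisfying the eq is within √t of z
  have key : ∀ w : ℂ, b < w.im → (w - z) / (t:ℂ) = cauchyTransform μ w →
      ‖w - z‖ ≤ Real.sqrt t := by
    intro w hw heq
    have hw0 : 0 < w.im := lt_trans hb0 hw
    have hFw : F w = w := (hfix w).mp heq
    have h1 : ‖w - z‖ = t * ‖cauchyTransform μ w‖ := by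
      conv_lhs => rw [← hFw]
      simp only [hF]
      rw [add_sub_cancel_left, norm_mul, Complex.norm_real, Real.norm_of_nonneg ht0]
    rw [h1]
    have h2 : ‖cauchyTransform μ w‖ ≤ (w.im)⁻¹ := norm_cauchyTransform_le μ w hw0
    have h3 : (w.im)⁻¹ ≤ b⁻¹ := inv_anti₀ hb0 hw.le
    calc t * ‖cauchyTransform μ w‖ ≤ t * b⁻¹ := by
          exact mul_le_mul_of_nonneg_left (le_trans h2 h3) ht0
      _ ≤ Real.sqrt t := by
          rw [← div_eq_mul_inv, div_le_iff₀ hb0]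
          nlinarith
  -- membership in ball gives im bound
  have hball_im : ∀ w : ℂ, w ∈ Metric.closedBall z (Real.sqrt t) → b < w.im := by
    intro w hwmem
    have hd : ‖z - w‖ ≤ Real.sqrt t := by
      rw [Metric.mem_closedBall] at hwmem
      rw [← Complex.dist_eq, dist_comm]
      exact hwmem
    have : z.im - w.im ≤ ‖z - w‖ := by
      calc z.im - w.im = (z - w).im := by simp
        _ ≤ |(z - w).im| := le_abs_self _
        _ ≤ ‖z - w‖ := Complex.abs_im_le_norm _
    have : z.im - w.im ≤ Real.sqrt t := le_trans this hd
    have hzb : z.im = 2 * b := by simp [hbdef]; ring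
    linarith
  -- F maps the closed ball into itself
  have hmaps : Set.MapsTo F (Metric.closedBall z (Real.sqrt t)) (Metric.closedBall z (Real.sqrt t)) := by
    intro w hwmem
    have hwim : b < w.im := hball_im w hwmem
    have hw0 : 0 < w.im := lt_trans hb0 hwim
    rw [Metric.mem_closedBall, dist_eq_norm]
    have h1 : ‖F w - z‖ = t * ‖cauchyTransform μ w‖ := by
      simp only [hF]
      rw [add_sub_cancel_left, norm_mul, Complex.norm_real, Real.norm_of_nonneg ht0]
    rw [h1]
    have h2 := norm_cauchyTransform_le μ w hw0
    have h3 : (w.im)⁻¹ ≤ b⁻¹ := inv_anti₀ hb0 hwim.le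
    calc t * ‖cauchyTransform μ w‖ ≤ t * b⁻¹ :=
          mul_le_mul_of_nonneg_left (le_trans h2 h3) ht0
      _ ≤ Real.sqrt t := by
          rw [← div_eq_mul_inv, div_le_iff₀ hb0]
          nlinarith
  -- contraction constant
  have hKlt : t / b ^ 2 < 1 := by
    rw [div_lt_one (by positivity)]
    nlinarith
  set K : NNReal := ⟨t / b ^ 2, by positivity⟩ with hKdef
  have hKr : (K : ℝ) = t / b ^ 2 := rfl
  -- Lipschitz bound for F on half-plane im > b
  have hlip : ∀ w₁ w₂ : ℂ, b < w₁.im → b < w₂.im →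
      ‖F w₁ - F w₂‖ ≤ (t / b ^ 2) * ‖w₁ - w₂‖ := by
    intro w₁ w₂ h1 h2
    have h10 : 0 < w₁.im := lt_trans hb0 h1
    have h20 : 0 < w₂.im := lt_trans hb0 h2
    have he : F w₁ - F w₂ = (t:ℂ) * (cauchyTransform μ w₁ - cauchyTransform μ w₂) := by
      simp only [hF]; ring
    rw [he, norm_mul, Complex.norm_real, Real.norm_of_nonneg ht0]
    have hd := norm_cauchyTransform_sub_le μ w₁ w₂ h10 h20
    have h3 : (w₁.im)⁻¹ ≤ b⁻¹ := inv_anti₀ hb0 h1.le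
    have h4 : (w₂.im)⁻¹ ≤ b⁻¹ := inv_anti₀ hb0 h2.le
    have h5 : (w₁.im)⁻¹ * (w₂.im)⁻¹ * ‖w₁ - w₂‖ ≤ b⁻¹ * b⁻¹ * ‖w₁ - w₂‖ := by
      have h6 : (w₁.im)⁻¹ * (w₂.im)⁻¹ ≤ b⁻¹ * b⁻¹ :=
        mul_le_mul h3 h4 (by positivity) (by positivity)
      exact mul_le_mul_of_nonneg_right h6 (norm_nonneg _)
    calc t * ‖cauchyTransform μ w₁ - cauchyTransform μ w₂‖
        ≤ t * (b⁻¹ * b⁻¹ * ‖w₁ - w₂‖) :=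
          mul_le_mul_of_nonneg_left (le_trans hd h5) ht0
      _ = (t / b ^ 2) * ‖w₁ - w₂‖ := by rw [pow_two, div_eq_mul_inv, mul_inv]; ring
  -- contraction on the restricted map
  have hcontr : ContractingWith K (hmaps.restrict F _ _) := by
    constructor
    · exact_mod_cast hKlt
    · apply LipschitzWith.of_dist_le_mul
      rintro ⟨w₁, hw₁⟩ ⟨w₂, hw₂⟩
      simp only [Set.MapsTo.restrict, Subtype.dist_eq, Set.restrict]
      rw [dist_eq_norm, dist_eq_norm]
      exact hlip w₁ w₂ (hball_im w₁ hw₁) (hball_im w₂ hw₂)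
  -- existence of fixed point
  have hzmem : z ∈ Metric.closedBall z (Real.sqrt t) := Metric.mem_closedBall_self hs0.le
  obtain ⟨w₀, hw₀mem, hw₀fix, -⟩ := hcontr.exists_fixedPoint'
    (Metric.isClosed_closedBall.isComplete) hmaps hzmem (edist_ne_top _ _)
  have hw₀im : b < w₀.im := hball_im w₀ hw₀mem
  have hw₀eq : (w₀ - z) / (t:ℂ) = cauchyTransform μ w₀ := (hfix w₀).mpr hw₀fix
  constructor
  · refine ⟨w₀, ⟨hw₀im, hw₀eq⟩, ?_⟩
    rintro w ⟨hwim, hweq⟩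
    have h1 := hlip w w₀ hwim hw₀im
    rw [(hfix w).mp hweq, hw₀fix] at h1
    by_contra hne
    have hpos : 0 < ‖w - w₀‖ := by
      rw [norm_pos_iff]; exact sub_ne_zero_of_ne hne
    nlinarith
  · intro w hwim hweq
    have := key w hwim hweq
    exact this
end

section
/- Let t > 0 and γ > 2√t, let μ and ν be probability measures on ℝ, and let z ∈ ℂ with Im z > γ. Suppose w, ŵ ∈ ℂ satisfy Im w > Im(z)/2, Im ŵ > Im(z)/2, w = z + t·G_μ(w) and ŵ = z + t·G_ν(ŵ). Then |ŵ − w| ≤ (t·γ²/(γ² − 4t)) · |G_ν(w) − G_μ(w)|. -/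
open MeasureTheory

lemma cauchy_ne (c : ℂ) (hc : 0 < c.im) (x : ℝ) : c - (x : ℂ) ≠ 0 := by
  intro h
  have : (c - (x : ℂ)).im = 0 := by rw [h]; simp
  simp [Complex.sub_im] at this
  linarith

lemma cauchy_norm_le (c : ℂ) (hc : 0 < c.im) (x : ℝ) :
    ‖(c - (x : ℂ))⁻¹‖ ≤ (c.im)⁻¹ := by
  rw [norm_inv]
  apply inv_anti₀ hc
  calc c.im = (c - (x : ℂ)).im := by simp [Complex.sub_im]
    _ ≤ |(c - (x : ℂ)).im| := le_abs_self _
    _ ≤ ‖c - (x : ℂ)‖ := Complex.abs_im_le_norm _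
    _ = ‖c - (x : ℂ)‖ := rfl

lemma cauchy_integrable (ρ : Measure ℝ) [IsProbabilityMeasure ρ] (c : ℂ) (hc : 0 < c.im) :
    Integrable (fun x : ℝ => (c - (x : ℂ))⁻¹) ρ := by
  apply Integrable.mono' (integrable_const (c.im)⁻¹)
  · exact (Continuous.inv₀ (continuous_const.sub Complex.continuous_ofReal)
      (fun x => cauchy_ne c hc x)).aestronglyMeasurable
  · filter_upwards with x
    exact cauchy_norm_le c hc x

/-- Deterministic stability estimate: if `w` and `wh` are fixed points of the subordination
equations for `μ` and `ν` respectively, then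
`|wh − w| ≤ (t γ²/(γ² − 4t)) |G_ν(w) − G_μ(w)|`. -/
theorem subordination_stability (t γ : ℝ) (ht : 0 < t) (hγ : 2 * Real.sqrt t < γ)
    (μ ν : Measure ℝ) [IsProbabilityMeasure μ] [IsProbabilityMeasure ν]
    (z : ℂ) (hz : γ < z.im) (w wh : ℂ)
    (hw : z.im / 2 < w.im) (hwh : z.im / 2 < wh.im)
    (heqw : w = z + (t : ℂ) * cauchyTransform μ w)
    (heqwh : wh = z + (t : ℂ) * cauchyTransform ν wh) :
    ‖wh - w‖ ≤ (t * γ ^ 2 / (γ ^ 2 - 4 * t)) *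
      ‖cauchyTransform ν w - cauchyTransform μ w‖ := by
  have hst : 0 < Real.sqrt t := Real.sqrt_pos.mpr ht
  have hγ0 : 0 < γ := lt_trans (by linarith) hγ
  have hzim : 0 < z.im := lt_trans hγ0 hz
  have hwim : 0 < w.im := lt_trans (by linarith) hw
  have hwhim : 0 < wh.im := lt_trans (by linarith) hwh
  have ht4 : 4 * t < γ ^ 2 := by
    have h := Real.sq_sqrt ht.le
    nlinarith [Real.sqrt_nonneg t]
  have hIμ := cauchy_integrable μ w hwim
  have hIν := cauchy_integrable ν w hwim
  have hIνh := cauchy_integrable ν wh hwhim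
  -- bound on G_ν(wh) - G_ν(w)
  have hdiff : ‖cauchyTransform ν wh - cauchyTransform ν w‖
      ≤ ‖wh - w‖ * ((wh.im)⁻¹ * (w.im)⁻¹) := by
    have heq : cauchyTransform ν wh - cauchyTransform ν w
        = ∫ x, (w - wh) * ((wh - (x : ℂ))⁻¹ * (w - (x : ℂ))⁻¹) ∂ν := by
      rw [cauchyTransform, cauchyTransform, ← integral_sub hIνh hIν]
      congr 1; ext x
      have h1 := cauchy_ne wh hwhim x
      have h2 := cauchy_ne w hwim x
      field_simp
      ring
    rw [heq]
    have hb : ∀ x : ℝ, ‖(w - wh) * ((wh - (x : ℂ))⁻¹ * (w - (x : ℂ))⁻¹)‖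
        ≤ ‖wh - w‖ * ((wh.im)⁻¹ * (w.im)⁻¹) := by
      intro x
      rw [norm_mul, norm_mul]
      have h1 := cauchy_norm_le wh hwhim x
      have h2 := cauchy_norm_le w hwim x
      have h3 : ‖w - wh‖ = ‖wh - w‖ :=
        norm_sub_rev w wh
      rw [h3]
      exact mul_le_mul_of_nonneg_left
        (mul_le_mul h1 h2 (norm_nonneg _) (by positivity)) (by positivity)
    calc ‖∫ x, (w - wh) * ((wh - (x : ℂ))⁻¹ * (w - (x : ℂ))⁻¹) ∂ν‖
        ≤ ‖wh - w‖ * ((wh.im)⁻¹ * (w.im)⁻¹) * (ν Set.univ).toReal :=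
          norm_integral_le_of_norm_le_const (Filter.Eventually.of_forall hb)
      _ = ‖wh - w‖ * ((wh.im)⁻¹ * (w.im)⁻¹) := by simp
  -- fixed point equation
  have hkey : wh - w = (t : ℂ) * (cauchyTransform ν wh - cauchyTransform ν w)
      + (t : ℂ) * (cauchyTransform ν w - cauchyTransform μ w) := by
    linear_combination heqwh - heqw
  set A := ‖wh - w‖ with hA
  set D := ‖cauchyTransform ν w - cauchyTransform μ w‖ with hD
  have hA1 : A ≤ t * (A * ((wh.im)⁻¹ * (w.im)⁻¹)) + t * D := by
    calc A = ‖(t : ℂ) * (cauchyTransform ν wh - cauchyTransform ν w)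
        + (t : ℂ) * (cauchyTransform ν w - cauchyTransform μ w)‖ := by rw [hA, hkey]
      _ ≤ ‖(t : ℂ) * (cauchyTransform ν wh - cauchyTransform ν w)‖
          + ‖(t : ℂ) * (cauchyTransform ν w - cauchyTransform μ w)‖ :=
          norm_add_le _ _
      _ = t * ‖cauchyTransform ν wh - cauchyTransform ν w‖ + t * D := by
          rw [norm_mul, norm_mul, Complex.norm_real, Real.norm_of_nonneg ht.le]
      _ ≤ t * (A * ((wh.im)⁻¹ * (w.im)⁻¹)) + t * D := by
          gcongr
  have hinv : (wh.im)⁻¹ * (w.im)⁻¹ ≤ 4 / γ ^ 2 := by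
    have hprod : γ ^ 2 / 4 ≤ wh.im * w.im := by nlinarith
    calc (wh.im)⁻¹ * (w.im)⁻¹ = (wh.im * w.im)⁻¹ := (mul_inv _ _).symm
      _ ≤ (γ ^ 2 / 4)⁻¹ := inv_anti₀ (by positivity) hprod
      _ = 4 / γ ^ 2 := by rw [inv_div]
  have hAnn : 0 ≤ A := norm_nonneg _
  have hA2 : A ≤ t * (A * (4 / γ ^ 2)) + t * D := by
    have h := mul_le_mul_of_nonneg_left (mul_le_mul_of_nonneg_left hinv hAnn) ht.le
    linarith
  have hγ2 : 0 < γ ^ 2 := by positivity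
  have hA3 : γ ^ 2 * A ≤ 4 * t * A + t * γ ^ 2 * D := by
    have h := mul_le_mul_of_nonneg_left hA2 hγ2.le
    have he : γ ^ 2 * (t * (A * (4 / γ ^ 2)) + t * D) = 4 * t * A + t * γ ^ 2 * D := by
      field_simp
    linarith [he ▸ h]
  rw [div_mul_eq_mul_div, le_div_iff₀ (by linarith)]
  nlinarith [hA3]
end

section
/- Let t > 0 and γ > 2√t, let μ₀ and ν be probability measures on ℝ, let x ∈ ℝ and set z = x + iγ. Suppose w ∈ ℂ satisfies the subordination relations w = z + t·G_ν(w) and G_{μ₀}(z) = G_ν(w). Then the density of μ₀ ∗ 𝒞_γ at x equals (1/(πt))·(γ − Im w), i.e. ∫_ℝ γ/(π((x − y)² + γ²)) dμ₀(y) = (γ − Im w)/(πt). -/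
open MeasureTheory

lemma cauchyTransform_im (μ : Measure ℝ) [IsProbabilityMeasure μ] (x γ : ℝ) (hγ : 0 < γ) :
    (cauchyTransform μ ((x : ℂ) + γ * Complex.I)).im
      = ∫ y, -γ / ((x - y) ^ 2 + γ ^ 2) ∂μ := by
  set z : ℂ := (x : ℂ) + γ * Complex.I with hz
  have hre : ∀ y : ℝ, (z - (y : ℂ)).re = x - y := by
    intro y; simp [hz]
  have him : ∀ y : ℝ, (z - (y : ℂ)).im = γ := by
    intro y; simp [hz]
  have hne : ∀ y : ℝ, z - (y : ℂ) ≠ 0 := by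
    intro y h
    have := him y
    rw [h] at this
    simp at this
    exact hγ.ne this
  have hcont : Continuous fun y : ℝ => (z - (y : ℂ))⁻¹ :=
    ((continuous_const.sub Complex.continuous_ofReal)).inv₀ hne
  have hbound : ∀ y : ℝ, ‖(z - (y : ℂ))⁻¹‖ ≤ γ⁻¹ := by
    intro y
    rw [norm_inv]
    have h1 : γ ≤ ‖z - (y : ℂ)‖ := by
      calc γ = |(z - (y : ℂ)).im| := by rw [him y]; exact (abs_of_pos hγ).symm
        _ ≤ ‖z - (y : ℂ)‖ := Complex.abs_im_le_norm _
    exact inv_anti₀ hγ h1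
  have hint : Integrable (fun y : ℝ => (z - (y : ℂ))⁻¹) μ := by
    apply Integrable.mono' (integrable_const γ⁻¹) hcont.aestronglyMeasurable
    exact Filter.Eventually.of_forall hbound
  have : ∀ y : ℝ, ((z - (y : ℂ))⁻¹).im = -γ / ((x - y) ^ 2 + γ ^ 2) := by
    intro y
    rw [Complex.inv_im, Complex.normSq_apply, hre, him]
    ring
  rw [cauchyTransform, show (∫ y : ℝ, (z - (y : ℂ))⁻¹ ∂μ).im
      = RCLike.im (∫ y : ℝ, (z - (y : ℂ))⁻¹ ∂μ) from rfl, ← integral_im hint]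
  exact integral_congr_ae (Filter.Eventually.of_forall fun y => this y)

/-- Key deconvolution identity: if `w` satisfies the subordination relations
`w = z + t G_ν(w)` and `G_{μ₀}(z) = G_ν(w)` at `z = x + iγ` with `γ > 2√t`, then the density
of `μ₀ ∗ 𝒞_γ` at `x` equals `(γ − Im w)/(π t)`. -/
theorem deconvolution_identity (t γ : ℝ) (ht : 0 < t) (hγ : 2 * Real.sqrt t < γ)
    (μ₀ ν : Measure ℝ) [IsProbabilityMeasure μ₀] [IsProbabilityMeasure ν]
    (x : ℝ) (w : ℂ)
    (hw : w = ((x : ℂ) + γ * Complex.I) + (t : ℂ) * cauchyTransform ν w)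
    (hsub : cauchyTransform μ₀ ((x : ℂ) + γ * Complex.I) = cauchyTransform ν w) :
    ∫ y, γ / (Real.pi * ((x - y) ^ 2 + γ ^ 2)) ∂μ₀ = (γ - w.im) / (Real.pi * t) := by
  have hγ0 : 0 < γ := lt_of_le_of_lt (by positivity) hγ
  have him := cauchyTransform_im μ₀ x γ hγ0
  have hwim : w.im = γ + t * (cauchyTransform μ₀ ((x : ℂ) + γ * Complex.I)).im := by
    rw [hsub]
    conv_lhs => rw [hw]
    simp [Complex.add_im, Complex.mul_im]
  have key : γ - w.im = -t * ∫ y, -γ / ((x - y) ^ 2 + γ ^ 2) ∂μ₀ := by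
    rw [hwim, him]; ring
  have hpi : (0:ℝ) < Real.pi := Real.pi_pos
  have : ∫ y, γ / (Real.pi * ((x - y) ^ 2 + γ ^ 2)) ∂μ₀
      = (1/Real.pi) * ∫ y, γ / ((x - y) ^ 2 + γ ^ 2) ∂μ₀ := by
    rw [← integral_const_mul]
    congr 1; funext y; field_simp
  rw [this, key]
  have hneg : ∫ y, -γ / ((x - y) ^ 2 + γ ^ 2) ∂μ₀
      = - ∫ y, γ / ((x - y) ^ 2 + γ ^ 2) ∂μ₀ := by
    rw [← integral_neg]
    congr 1; funext y; ring
  rw [hneg]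
  field_simp
end

section
/- Let t > 0 and γ > 2√t, let z ∈ ℂ with Im z ≥ γ/2, and let μ₁, μ₂ be probability measures on ℝ. Suppose g₁, g₂ ∈ ℂ satisfy Im g₁ ≤ 0, Im g₂ ≤ 0, and the self-consistent equations g₁ = ∫_ℝ (z − t·g₁ − x)⁻¹ dμ₁(x) and g₂ = ∫_ℝ (z − t·g₂ − x)⁻¹ dμ₂(x). Then |g₁ − g₂| ≤ (γ²/(γ² − 4t)) · | ∫_ℝ (z − t·g₂ − x)⁻¹ dμ₁(x) − ∫_ℝ (z − t·g₂ − x)⁻¹ dμ₂(x) |. -/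
open MeasureTheory

/-- Deterministic core of the fluctuation estimate for `A₃ⁿ`: if `g₁, g₂` with nonpositive
imaginary parts satisfy the self-consistent equations `gᵢ = ∫ (z − t gᵢ − x)⁻¹ dμᵢ(x)` for
`Im z ≥ γ/2` with `γ > 2√t`, then
`|g₁ − g₂| ≤ (γ²/(γ² − 4t)) |∫ (z − t g₂ − x)⁻¹ dμ₁ − ∫ (z − t g₂ − x)⁻¹ dμ₂|`. -/
theorem selfconsistent_stability (t γ : ℝ) (ht : 0 < t) (hγ : 2 * Real.sqrt t < γ)
    (z : ℂ) (hz : γ / 2 ≤ z.im)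
    (μ₁ μ₂ : Measure ℝ) [IsProbabilityMeasure μ₁] [IsProbabilityMeasure μ₂]
    (g₁ g₂ : ℂ) (hg₁ : g₁.im ≤ 0) (hg₂ : g₂.im ≤ 0)
    (e₁ : g₁ = ∫ x, (z - (t : ℂ) * g₁ - (x : ℂ))⁻¹ ∂μ₁)
    (e₂ : g₂ = ∫ x, (z - (t : ℂ) * g₂ - (x : ℂ))⁻¹ ∂μ₂) :
    ‖g₁ - g₂‖ ≤ (γ ^ 2 / (γ ^ 2 - 4 * t)) *
      ‖(∫ x, (z - (t : ℂ) * g₂ - (x : ℂ))⁻¹ ∂μ₁) -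
        ∫ x, (z - (t : ℂ) * g₂ - (x : ℂ))⁻¹ ∂μ₂‖ := by
  have hγ0 : 0 < γ := lt_trans (by positivity) hγ
  have hγ2 : 4 * t < γ ^ 2 := by
    nlinarith [Real.sq_sqrt ht.le, Real.sqrt_nonneg t]
  -- imaginary parts of denominators
  have him : ∀ (g : ℂ), g.im ≤ 0 → ∀ x : ℝ, γ / 2 ≤ (z - (t:ℂ)*g - (x:ℂ)).im := by
    intro g hg x
    simp only [Complex.sub_im, Complex.mul_im, Complex.ofReal_im, Complex.ofReal_re,
      zero_mul, mul_zero, add_zero, sub_zero]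
    nlinarith
  have hne : ∀ (g : ℂ), g.im ≤ 0 → ∀ x : ℝ, z - (t:ℂ)*g - (x:ℂ) ≠ 0 := by
    intro g hg x h
    have := him g hg x
    rw [h] at this; simp at this; linarith
  have hinv : ∀ (g : ℂ), g.im ≤ 0 → ∀ x : ℝ, ‖(z - (t:ℂ)*g - (x:ℂ))⁻¹‖ ≤ 2/γ := by
    intro g hg x
    have h1 : γ/2 ≤ ‖z - (t:ℂ)*g - (x:ℂ)‖ := by
      refine le_trans (him g hg x) ?_
      refine le_trans (le_abs_self _) ?_
      exact Complex.abs_im_le_norm _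
    rw [norm_inv]
    calc ‖z - (t:ℂ)*g - (x:ℂ)‖⁻¹ ≤ (γ/2)⁻¹ := by
          apply inv_anti₀ (by positivity) h1
      _ = 2/γ := by rw [inv_div]
  -- continuity / integrability
  have hcont : ∀ (g : ℂ), g.im ≤ 0 → Continuous (fun x : ℝ => (z - (t:ℂ)*g - (x:ℂ))⁻¹) := by
    intro g hg
    exact Continuous.inv₀ ((continuous_const.sub Complex.continuous_ofReal)) (fun x => hne g hg x)
  have hint : ∀ (g : ℂ), g.im ≤ 0 → ∀ (μ : Measure ℝ) [IsProbabilityMeasure μ],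
      Integrable (fun x : ℝ => (z - (t:ℂ)*g - (x:ℂ))⁻¹) μ := by
    intro g hg μ _
    refine Integrable.mono' (integrable_const (2/γ)) (hcont g hg).aestronglyMeasurable ?_
    filter_upwards with x
    exact hinv g hg x
  have hintp : Integrable (fun x : ℝ =>
      (z - (t:ℂ)*g₁ - (x:ℂ))⁻¹ * (z - (t:ℂ)*g₂ - (x:ℂ))⁻¹) μ₁ := by
    refine Integrable.mono' (integrable_const (2/γ * (2/γ)))
      ((hcont g₁ hg₁).mul (hcont g₂ hg₂)).aestronglyMeasurable ?_
    filter_upwards with x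
    rw [norm_mul]
    exact mul_le_mul (hinv g₁ hg₁ x) (hinv g₂ hg₂ x) (norm_nonneg _) (by positivity)
  -- key algebraic identity
  set K : ℂ := ∫ x, (z - (t:ℂ)*g₁ - (x:ℂ))⁻¹ * (z - (t:ℂ)*g₂ - (x:ℂ))⁻¹ ∂μ₁ with hKdef
  set D : ℂ := (∫ x, (z - (t:ℂ)*g₂ - (x:ℂ))⁻¹ ∂μ₁) - ∫ x, (z - (t:ℂ)*g₂ - (x:ℂ))⁻¹ ∂μ₂ with hDdef
  have hsplit : g₁ - g₂ = ((t:ℂ) * (g₁ - g₂)) * K + D := by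
    have h1 : (∫ x, (z - (t:ℂ)*g₁ - (x:ℂ))⁻¹ ∂μ₁) - (∫ x, (z - (t:ℂ)*g₂ - (x:ℂ))⁻¹ ∂μ₁)
        = ((t:ℂ) * (g₁ - g₂)) * K := by
      rw [← integral_sub (hint g₁ hg₁ μ₁) (hint g₂ hg₂ μ₁), hKdef, ← integral_const_mul]
      congr 1; funext x
      have ha := hne g₁ hg₁ x
      have hb := hne g₂ hg₂ x
      field_simp
      ring
    calc g₁ - g₂ = (∫ x, (z - (t:ℂ)*g₁ - (x:ℂ))⁻¹ ∂μ₁) - ∫ x, (z - (t:ℂ)*g₂ - (x:ℂ))⁻¹ ∂μ₂ := by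
          rw [← e₁, ← e₂]
      _ = ((∫ x, (z - (t:ℂ)*g₁ - (x:ℂ))⁻¹ ∂μ₁) - ∫ x, (z - (t:ℂ)*g₂ - (x:ℂ))⁻¹ ∂μ₁) + D := by
          rw [hDdef]; ring
      _ = ((t:ℂ) * (g₁ - g₂)) * K + D := by rw [h1]
  have hK : ‖K‖ ≤ 2/γ * (2/γ) := by
    have := norm_integral_le_of_norm_le_const (μ := μ₁) (C := 2/γ * (2/γ))
      (f := fun x : ℝ => (z - (t:ℂ)*g₁ - (x:ℂ))⁻¹ * (z - (t:ℂ)*g₂ - (x:ℂ))⁻¹)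
      (by filter_upwards with x
          rw [norm_mul]
          exact mul_le_mul (hinv g₁ hg₁ x) (hinv g₂ hg₂ x) (norm_nonneg _) (by positivity))
    simpa using this
  have hmain : ‖g₁ - g₂‖ ≤ t * ‖g₁ - g₂‖ * (2/γ * (2/γ)) + ‖D‖ := by
    calc ‖g₁ - g₂‖ = ‖((t:ℂ) * (g₁ - g₂)) * K + D‖ := by rw [← hsplit]
      _ ≤ ‖((t:ℂ) * (g₁ - g₂)) * K‖ + ‖D‖ := norm_add_le _ _
      _ ≤ t * ‖g₁ - g₂‖ * (2/γ * (2/γ)) + ‖D‖ := by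
          gcongr
          rw [norm_mul, norm_mul, Complex.norm_real, Real.norm_of_nonneg ht.le]
          exact mul_le_mul_of_nonneg_left hK (by positivity)
  have hA : (0:ℝ) ≤ ‖g₁ - g₂‖ := norm_nonneg _
  have hB : (0:ℝ) ≤ ‖D‖ := norm_nonneg _
  have hkey : (t * ‖g₁ - g₂‖ * (2/γ * (2/γ)) + ‖D‖) * γ^2
      = 4 * t * ‖g₁ - g₂‖ + ‖D‖ * γ^2 := by
    field_simp
    ring
  have hmain' : ‖g₁ - g₂‖ * γ^2 ≤ 4 * t * ‖g₁ - g₂‖ + ‖D‖ * γ^2 := by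
    have h := mul_le_mul_of_nonneg_right hmain (le_of_lt (by positivity : (0:ℝ) < γ^2))
    linarith [hkey ▸ h]
  rw [div_mul_eq_mul_div, le_div_iff₀ (by linarith)]
  nlinarith [hmain', hA, hB]
end

section
/- Let μ be a probability measure on ℝ, let γ > 0 and let κ > γ. Then ∫_{{x ∈ ℝ : |x| > κ}} ( ∫_ℝ ((x − λ)² + γ²/4)⁻¹ dμ(λ) ) dx ≤ 4/κ + (3π/γ) · μ({λ ∈ ℝ : |λ| > κ/2}). -/
set_option maxHeartbeats 1000000

open MeasureTheory Set Filter

lemma aux_Ioi (κ : ℝ) (hκ : 0 < κ) :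
    IntegrableOn (fun x : ℝ => ((x - κ/2)^2)⁻¹) (Ioi κ) ∧
    ∫ x in Ioi κ, ((x - κ/2)^2)⁻¹ = 2/κ := by
  have hderiv : ∀ x ∈ Ici κ, HasDerivAt (fun y : ℝ => -(y - κ/2)⁻¹) (((x - κ/2)^2)⁻¹) x := by
    intro x hx
    have hx' : κ ≤ x := hx
    have hx0 : x - κ/2 ≠ 0 := by nlinarith
    have h : HasDerivAt (fun y : ℝ => -(y - κ/2)⁻¹) (-(-1 / (x - κ/2)^2)) x := (((hasDerivAt_id x).sub_const (κ/2)).inv hx0).neg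
    convert h using 1
    ring
  have hpos : ∀ x ∈ Ioi κ, 0 ≤ ((x - κ/2)^2)⁻¹ := fun x _ => by positivity
  have htend : Tendsto (fun y : ℝ => -(y - κ/2)⁻¹) atTop (nhds 0) := by
    rw [← neg_zero]
    exact (tendsto_inv_atTop_zero.comp (tendsto_atTop_add_const_right _ _ tendsto_id)).neg
  refine ⟨integrableOn_Ioi_deriv_of_nonneg' hderiv hpos htend, ?_⟩
  rw [integral_Ioi_of_hasDerivAt_of_nonneg' hderiv hpos htend]
  have : κ - κ/2 = κ/2 := by ring
  rw [this]
  field_simp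
  ring

lemma cauchy_aux (c : ℝ) (hc : 0 < c) (l : ℝ) :
    Integrable (fun x : ℝ => ((x - l)^2 + c^2)⁻¹) ∧
    ∫ x : ℝ, ((x - l)^2 + c^2)⁻¹ = Real.pi / c := by
  have hrw : (fun x : ℝ => ((x - l)^2 + c^2)⁻¹)
      = fun x : ℝ => c⁻¹ * c⁻¹ * (1 + ((x - l)/c)^2)⁻¹ := by
    funext x
    have h1 : (x - l)^2 + c^2 > 0 := by positivity
    field_simp
    ring
  have hint : Integrable (fun x : ℝ => (1 + ((x - l)/c)^2)⁻¹) :=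
    (integrable_inv_one_add_sq.comp_div hc.ne').comp_sub_right l
  constructor
  · rw [hrw]; exact hint.const_mul _
  · rw [hrw, integral_const_mul,
      integral_sub_right_eq_self (fun x : ℝ => (1 + (x/c)^2)⁻¹) l,
      Measure.integral_comp_div (fun x : ℝ => (1 + x^2)⁻¹) c,
      integral_univ_inv_one_add_sq, abs_of_pos hc, smul_eq_mul]
    field_simp

/-- Tail bound: for a probability measure `μ`, `γ > 0` and `κ > γ`,
`∫_{|x|>κ} ∫ ((x − λ)² + γ²/4)⁻¹ dμ(λ) dx ≤ 4/κ + (3π/γ) μ({|λ| > κ/2})`. -/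
theorem tail_integral_bound (μ : Measure ℝ) [IsProbabilityMeasure μ]
    (γ κ : ℝ) (hγ : 0 < γ) (hκ : γ < κ) :
    ∫⁻ x in {x : ℝ | κ < |x|},
        (∫⁻ l, ENNReal.ofReal (((x - l) ^ 2 + γ ^ 2 / 4)⁻¹) ∂μ) ≤
      ENNReal.ofReal (4 / κ) + ENNReal.ofReal (3 * Real.pi / γ) * μ {l : ℝ | κ / 2 < |l|} := by
  have hκ0 : 0 < κ := hγ.trans hκ
  have hSm : MeasurableSet {x : ℝ | κ < |x|} :=
    measurableSet_lt measurable_const measurable_abs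
  have hTm : MeasurableSet {l : ℝ | κ / 2 < |l|} :=
    measurableSet_lt measurable_const measurable_abs
  rw [lintegral_lintegral_swap (by fun_prop)]
  -- pointwise bound on the inner integral (after swap)
  have key : ∀ l : ℝ, (∫⁻ x in {x : ℝ | κ < |x|},
      ENNReal.ofReal (((x - l) ^ 2 + γ ^ 2 / 4)⁻¹)) ≤
      ENNReal.ofReal (4/κ) +
        Set.indicator {l : ℝ | κ/2 < |l|} (fun _ => ENNReal.ofReal (3*Real.pi/γ)) l := by
    intro l
    by_cases hl : κ/2 < |l|
    · -- large l : bound by the full Cauchy integral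
      rw [Set.indicator_of_mem (s := {l : ℝ | κ/2 < |l|}) hl]
      have hc : (0:ℝ) < γ/2 := by linarith
      obtain ⟨hint, hval⟩ := cauchy_aux (γ/2) hc l
      have h1 : (∫⁻ x in {x : ℝ | κ < |x|},
          ENNReal.ofReal (((x - l) ^ 2 + γ ^ 2 / 4)⁻¹)) ≤
          ∫⁻ x : ℝ, ENNReal.ofReal (((x - l) ^ 2 + γ ^ 2 / 4)⁻¹) :=
        setLIntegral_le_lintegral _ _
      have h2 : (∫⁻ x : ℝ, ENNReal.ofReal (((x - l) ^ 2 + γ ^ 2 / 4)⁻¹))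
          = ENNReal.ofReal (Real.pi / (γ/2)) := by
        have heq : (fun x : ℝ => ENNReal.ofReal (((x - l) ^ 2 + γ ^ 2 / 4)⁻¹))
            = fun x : ℝ => ENNReal.ofReal (((x - l) ^ 2 + (γ/2) ^ 2)⁻¹) := by
          funext x; congr 2; ring
        rw [heq, ← ofReal_integral_eq_lintegral_ofReal hint
          (Filter.Eventually.of_forall fun x => by positivity), hval]
      refine le_trans (h1.trans h2.le) (le_add_left (ENNReal.ofReal_le_ofReal ?_))
      rw [div_div_eq_mul_div]
      have hπ : 0 < Real.pi := Real.pi_pos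
      rw [div_le_div_iff₀ hγ hγ]
      nlinarith
    · -- small l : pointwise bound by ((|x| - κ/2)^2)⁻¹
      rw [Set.indicator_of_notMem (s := {l : ℝ | κ/2 < |l|}) hl, add_zero]
      push_neg at hl
      have hbound : (∫⁻ x in {x : ℝ | κ < |x|},
          ENNReal.ofReal (((x - l) ^ 2 + γ ^ 2 / 4)⁻¹)) ≤
          ∫⁻ x in {x : ℝ | κ < |x|}, ENNReal.ofReal (((|x| - κ/2)^2)⁻¹) := by
        refine setLIntegral_mono (by fun_prop) fun x hx => ?_
        have hx' : κ < |x| := hx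
        apply ENNReal.ofReal_le_ofReal
        have h0 : (0:ℝ) ≤ |x| - κ/2 := by linarith
        have h1 : |x| - κ/2 ≤ |x - l| := by
          have := abs_sub_abs_le_abs_sub x l
          linarith
        have h2 : (|x| - κ/2)^2 ≤ (x - l)^2 := by
          calc (|x| - κ/2)^2 ≤ |x - l|^2 := by nlinarith
          _ = (x - l)^2 := sq_abs _
        have hp : (0:ℝ) < (|x| - κ/2)^2 := by nlinarith
        apply inv_anti₀ hp
        nlinarith
      refine hbound.trans ?_
      -- split the set into two rays
      have hset : {x : ℝ | κ < |x|} = Iio (-κ) ∪ Ioi κ := by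
        ext x
        simp only [mem_setOf_eq, mem_union, mem_Iio, mem_Ioi, lt_abs, lt_neg]
        tauto
      obtain ⟨hIntOn, hval⟩ := aux_Ioi κ hκ0
      have hIoi : (∫⁻ x in Ioi κ, ENNReal.ofReal (((|x| - κ/2)^2)⁻¹))
          = ENNReal.ofReal (2/κ) := by
        have habs : (∫⁻ x in Ioi κ, ENNReal.ofReal (((|x| - κ/2)^2)⁻¹))
            = ∫⁻ x in Ioi κ, ENNReal.ofReal (((x - κ/2)^2)⁻¹) :=
          setLIntegral_congr_fun measurableSet_Ioi
            (fun x hx => by rw [abs_of_pos (hκ0.trans hx)])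
        rw [habs, ← ofReal_integral_eq_lintegral_ofReal hIntOn
          (ae_restrict_of_forall_mem measurableSet_Ioi fun x hx => by positivity), hval]
      have hIio : (∫⁻ x in Iio (-κ), ENNReal.ofReal (((|x| - κ/2)^2)⁻¹))
          = ENNReal.ofReal (2/κ) := by
        have hpre : Iio (-κ) = (fun x : ℝ => -x) ⁻¹' (Ioi κ) := by
          ext x; simp [lt_neg]
        have hmp : MeasurePreserving (fun x : ℝ => -x) (volume : Measure ℝ) volume :=
          ⟨measurable_neg, Measure.map_neg_eq_self _⟩
        have := hmp.setLIntegral_comp_preimage_emb measurableEmbedding_neg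
          (fun y => ENNReal.ofReal (((|y| - κ/2)^2)⁻¹)) (Ioi κ)
        rw [hpre]
        simp only [abs_neg] at this
        rw [this, hIoi]
      rw [hset, lintegral_union measurableSet_Ioi
        ((Iio_disjoint_Ici (by linarith : -κ ≤ κ)).mono_right Ioi_subset_Ici_self), hIio, hIoi,
        ← ENNReal.ofReal_add (by positivity) (by positivity)]
      apply ENNReal.ofReal_le_ofReal
      rw [← add_div]
      norm_num
  calc (∫⁻ l, (∫⁻ x in {x : ℝ | κ < |x|},
        ENNReal.ofReal (((x - l) ^ 2 + γ ^ 2 / 4)⁻¹)) ∂μ)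
      ≤ ∫⁻ l, (ENNReal.ofReal (4/κ) +
          Set.indicator {l : ℝ | κ/2 < |l|} (fun _ => ENNReal.ofReal (3*Real.pi/γ)) l) ∂μ :=
        lintegral_mono key
    _ = ENNReal.ofReal (4 / κ) + ENNReal.ofReal (3 * Real.pi / γ) * μ {l : ℝ | κ / 2 < |l|} := by
        rw [lintegral_add_left (by fun_prop), lintegral_const,
          lintegral_indicator hTm, setLIntegral_const, measure_univ, mul_one]
end
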